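/- If s_1, ..., s_{n+1} are i.i.d. continuous real random variables (so that ties occur with probability zero), then for α ∈ (0,1) with ⌈(1-α)(n+1)⌉ ≤ n, the split conformal coverage is also upper bounded: 1 - α ≤ P[s_{n+1} ≤ Q_α(\{s_i\}_{i=1}^n)] ≤ 1 - α + 1/(n+1), where Q_α is the ⌈(1-α)(n+1)⌉-th smallest of s_1,...,s_n. -/

import Mathlib

open MeasureTheory ProbabilityTheory
open scoped ENNReal

/-- The `k`-th smallest element of a finite multiset of reals
(i.e. the `k`-th order statistic, 1-indexed). -/
noncomputable def kthSmallestR (s : Multiset ℝ) (k : ℕ) : ℝ :=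
  (s.sort (· ≤ ·)).getD (k - 1) 0

/-- Rank of coordinate `i` in the tuple `x` (1-indexed when entries are distinct). -/
noncomputable def rkR {N : ℕ} (x : Fin N → ℝ) (i : Fin N) : ℕ :=
  (Finset.univ.filter (fun j => x j ≤ x i)).card

lemma le_getD_sorted {t : List ℝ} (ht : t.Pairwise (· ≤ ·)) {k : ℕ} (hk1 : 1 ≤ k)
    (hkn : k ≤ t.length) (x : ℝ) :
    x ≤ t.getD (k - 1) 0 ↔ t.countP (fun y => decide (y < x)) < k := by
  have hlt : k - 1 < t.length := lt_of_lt_of_le (Nat.sub_lt hk1 one_pos) hkn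
  rw [List.getD_eq_getElem t 0 hlt]
  constructor
  · intro hx
    have hsplit := List.take_append_drop (k - 1) t
    have h0 : (t.drop (k - 1)).countP (fun y => decide (y < x)) = 0 := by
      rw [List.countP_eq_zero]
      intro a ha
      obtain ⟨m, hm, rfl⟩ := List.getElem_of_mem ha
      have hm' : m < t.length - (k - 1) := by simpa [List.length_drop] using hm
      have hmlen : k - 1 + m < t.length := by omega
      have hle : t[k - 1] ≤ t[k - 1 + m] := by
        have := ht.rel_get_of_le (a := ⟨k - 1, hlt⟩) (b := ⟨k - 1 + m, hmlen⟩)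
          (by simp [Fin.le_def])
        simpa [List.get_eq_getElem] using this
      have : x ≤ (t.drop (k - 1))[m] := by
        rw [List.getElem_drop]; exact hx.trans hle
      simpa using not_lt.mpr this
    have : t.countP (fun y => decide (y < x))
        = (t.take (k - 1)).countP (fun y => decide (y < x)) := by
      conv_lhs => rw [← hsplit]
      rw [List.countP_append, h0, Nat.add_zero]
    rw [this]
    calc (t.take (k - 1)).countP (fun y => decide (y < x)) ≤ (t.take (k - 1)).length :=
          List.countP_le_length
      _ ≤ k - 1 := by simp
      _ < k := Nat.sub_lt hk1 one_pos
  · intro hcount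
    by_contra hx
    push_neg at hx
    have hall : (t.take k).countP (fun y => decide (y < x)) = (t.take k).length := by
      rw [List.countP_eq_length]
      intro a ha
      obtain ⟨m, hm, rfl⟩ := List.getElem_of_mem ha
      have hmk : m < k := by simpa using lt_of_lt_of_le hm (by simp)
      have hmlen : m < t.length := lt_of_lt_of_le hmk hkn
      have hle : t[m] ≤ t[k - 1] := by
        have := ht.rel_get_of_le (a := ⟨m, hmlen⟩) (b := ⟨k - 1, hlt⟩)
          (by simp [Fin.le_def]; omega)
        simpa [List.get_eq_getElem] using this
      have : (t.take k)[m] < x := by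
        rw [List.getElem_take]; exact lt_of_le_of_lt hle hx
      simpa using this
    have hlen : (t.take k).length = k := by simp [hkn]
    have : k ≤ t.countP (fun y => decide (y < x)) := by
      calc k = (t.take k).countP (fun y => decide (y < x)) := by rw [hall, hlen]
        _ ≤ t.countP (fun y => decide (y < x)) :=
          (List.take_sublist k t).countP_le
    omega

lemma le_kthSmallestR_iff (m : Multiset ℝ) {k : ℕ} (hk1 : 1 ≤ k) (hkn : k ≤ Multiset.card m)
    (x : ℝ) : x ≤ kthSmallestR m k ↔ Multiset.countP (fun y => y < x) m < k := by
  have hs := m.pairwise_sort (· ≤ ·)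
  have hlen : (m.sort (· ≤ ·)).length = Multiset.card m := Multiset.length_sort _
  rw [kthSmallestR, le_getD_sorted hs hk1 (by rw [hlen]; exact hkn)]
  conv_rhs => rw [← Multiset.sort_eq m (· ≤ ·)]
  rw [Multiset.coe_countP]

lemma countP_ofFn {N : ℕ} (g : Fin N → ℝ) (p : ℝ → Prop) [DecidablePred p] :
    (List.ofFn g).countP (fun y => decide (p y))
      = (Finset.univ.filter (fun i => p (g i))).card := by
  rw [List.ofFn_eq_map, List.countP_map, Fin.univ_def]
  simp only [Finset.filter, Finset.card, Multiset.countP_eq_card_filter, Function.comp,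
    List.countP_eq_length_filter, Multiset.quot_mk_to_coe'']
  rfl

lemma rkR_lt_of_lt {N : ℕ} {x : Fin N → ℝ} {i j : Fin N} (h : x i < x j) :
    rkR x i < rkR x j := by
  apply Finset.card_lt_card
  constructor
  · intro a ha
    simp only [Finset.mem_filter, Finset.mem_univ, true_and] at ha ⊢
    exact ha.trans h.le
  · intro hsub
    have := hsub (Finset.mem_filter.mpr ⟨Finset.mem_univ j, le_refl _⟩)
    simp only [Finset.mem_filter, Finset.mem_univ, true_and] at this
    exact absurd this (not_le.mpr h)

lemma rkR_inj {N : ℕ} {x : Fin N → ℝ} (hx : Function.Injective x) :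
    Function.Injective (rkR x) := by
  intro i j h
  by_contra hne
  rcases lt_trichotomy (x i) (x j) with hlt | heq | hgt
  · exact absurd h (Nat.ne_of_lt (rkR_lt_of_lt hlt))
  · exact hne (hx heq)
  · exact absurd h.symm (Nat.ne_of_lt (rkR_lt_of_lt hgt))

lemma rkR_mem_Icc {N : ℕ} (x : Fin N → ℝ) (i : Fin N) : rkR x i ∈ Finset.Icc 1 N := by
  refine Finset.mem_Icc.mpr ⟨?_, ?_⟩
  · have : i ∈ Finset.univ.filter (fun j => x j ≤ x i) :=
      Finset.mem_filter.mpr ⟨Finset.mem_univ i, le_refl _⟩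
    exact Finset.card_pos.mpr ⟨i, this⟩
  · calc rkR x i ≤ (Finset.univ : Finset (Fin N)).card := Finset.card_filter_le _ _
      _ = N := Finset.card_univ.trans (Fintype.card_fin N)

lemma rkR_surj {N : ℕ} {x : Fin N → ℝ} (hx : Function.Injective x) {j : ℕ}
    (h1 : 1 ≤ j) (h2 : j ≤ N) : ∃ i, rkR x i = j := by
  have himg : Finset.univ.image (rkR x) = Finset.Icc 1 N := by
    apply Finset.eq_of_subset_of_card_le
    · intro a ha
      obtain ⟨i, _, rfl⟩ := Finset.mem_image.mp ha
      exact rkR_mem_Icc x i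
    · rw [Finset.card_image_of_injective _ (rkR_inj hx)]
      simp [Nat.card_Icc]
  have : j ∈ Finset.univ.image (rkR x) := by
    rw [himg]; exact Finset.mem_Icc.mpr ⟨h1, h2⟩
  obtain ⟨i, _, hi⟩ := Finset.mem_image.mp this
  exact ⟨i, hi⟩

lemma rkR_comp_perm {N : ℕ} (x : Fin N → ℝ) (τ : Equiv.Perm (Fin N)) (i : Fin N) :
    rkR (x ∘ τ) i = rkR x (τ i) := by
  unfold rkR
  apply Finset.card_nbij' (fun j => τ j) (fun j => τ.symm j)
  · intro a ha
    simp only [Finset.coe_filter, Set.mem_setOf_eq, Finset.mem_filter, Finset.mem_univ, true_and, Function.comp] at ha ⊢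
    exact ha
  · intro a ha
    simp only [Finset.coe_filter, Set.mem_setOf_eq, Finset.mem_filter, Finset.mem_univ, true_and, Function.comp] at ha ⊢
    simpa using ha
  · intro a _; simp
  · intro a _; simp

lemma measurable_rkR {N : ℕ} (i : Fin N) : Measurable fun x : Fin N → ℝ => rkR x i := by
  unfold rkR
  simp_rw [Finset.card_filter]
  exact Finset.measurable_sum _ fun j _ =>
    Measurable.ite (measurableSet_le (measurable_pi_apply j) (measurable_pi_apply i))
      measurable_const measurable_const

lemma measurableSet_injSet {N : ℕ} :
    MeasurableSet {x : Fin N → ℝ | Function.Injective x} := by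
  have : {x : Fin N → ℝ | Function.Injective x}
      = ⋂ (i) (j) (_ : i ≠ j), {x : Fin N → ℝ | x i = x j}ᶜ := by
    ext x
    simp only [Set.mem_setOf_eq, Set.mem_iInter, Set.mem_compl_iff]
    constructor
    · intro h i j hij hx; exact hij (h hx)
    · intro h a b hab
      by_contra hne
      exact h a b hne hab
  rw [this]
  exact MeasurableSet.iInter fun i => MeasurableSet.iInter fun j =>
    MeasurableSet.iInter fun _ =>
      (measurableSet_eq_fun (measurable_pi_apply i) (measurable_pi_apply j)).compl

lemma key_equiv {N : ℕ} (x : Fin (N + 1) → ℝ)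
    (hx : ∀ i : Fin N, x i.castSucc ≠ x (Fin.last N))
    {k : ℕ} (hk1 : 1 ≤ k) (hkn : k ≤ N) :
    (x (Fin.last N) ≤ kthSmallestR ↑(List.ofFn fun i : Fin N => x i.castSucc) k
      ↔ rkR x (Fin.last N) ≤ k) := by
  rw [le_kthSmallestR_iff _ hk1 (by simp [hkn])]
  have hcount : Multiset.countP (fun y => y < x (Fin.last N))
      ↑(List.ofFn fun i : Fin N => x i.castSucc)
      = (Finset.univ.filter (fun i : Fin N => x i.castSucc < x (Fin.last N))).card := by
    rw [Multiset.coe_countP, countP_ofFn]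
  have hrk : rkR x (Fin.last N)
      = (Finset.univ.filter (fun i : Fin N => x i.castSucc < x (Fin.last N))).card + 1 := by
    unfold rkR
    rw [Fin.univ_castSuccEmb, Finset.filter_cons, if_pos (le_refl _), Finset.card_cons,
      Finset.filter_map, Finset.card_map]
    congr 2
    apply Finset.filter_congr
    intro i _
    simp only [Function.comp, Fin.castSuccEmb, Fin.coe_castSucc]
    constructor
    · intro h; exact lt_of_le_of_ne h (hx i)
    · intro h; exact h.le
  rw [hcount, hrk]
  omega

theorem stmt5 {Ω : Type*} [MeasureSpace Ω] [IsProbabilityMeasure (ℙ : Measure Ω)]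
    (n : ℕ) (s : Fin (n + 1) → Ω → ℝ) (hmeas : ∀ i, Measurable (s i))
    -- i.i.d. with a common atomless (continuous) distribution μ
    (μ : Measure ℝ) [NullSingletonClass μ]
    (hindep : iIndepFun s ℙ)
    (hident : ∀ i, Measure.map (s i) ℙ = μ)
    (α : ℝ) (hα : α ∈ Set.Ioo (0 : ℝ) 1)
    (hk : ⌈(1 - α) * (n + 1)⌉₊ ≤ n) :
    ENNReal.ofReal (1 - α) ≤
      ℙ {ω | s (Fin.last n) ω ≤
        kthSmallestR (Multiset.ofList (List.ofFn fun i : Fin n => s i.castSucc ω))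
          ⌈(1 - α) * (n + 1)⌉₊} ∧
    ℙ {ω | s (Fin.last n) ω ≤
        kthSmallestR (Multiset.ofList (List.ofFn fun i : Fin n => s i.castSucc ω))
          ⌈(1 - α) * (n + 1)⌉₊} ≤
      ENNReal.ofReal (1 - α + 1 / (n + 1)) := by
  obtain ⟨hα0, hα1⟩ := hα
  set k := ⌈(1 - α) * (n + 1)⌉₊ with hkdef
  have hpos : (0:ℝ) < (1 - α) * (n + 1) := by
    apply mul_pos (by linarith); positivity
  have hk1 : 1 ≤ k := Nat.one_le_ceil_iff.mpr hpos
  have hμprob : IsProbabilityMeasure μ := by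
    rw [← hident 0]; exact Measure.isProbabilityMeasure_map (hmeas 0).aemeasurable
  set f : Ω → (Fin (n + 1) → ℝ) := fun ω i => s i ω with hfdef
  have hf : Measurable f := measurable_pi_lambda _ hmeas
  set ν : Measure (Fin (n + 1) → ℝ) := Measure.pi (fun _ => μ) with hνdef
  -- joint law is the product measure
  have hmap : Measure.map f ℙ = ν := by
    refine (Measure.pi_eq fun t ht => ?_).symm
    rw [Measure.map_apply hf (MeasurableSet.univ_pi ht)]
    have hpre : f ⁻¹' Set.pi Set.univ t = ⋂ i ∈ Finset.univ, s i ⁻¹' t i := by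
      ext ω; simp [Set.mem_pi, hfdef]
    rw [hpre, hindep.measure_inter_preimage_eq_mul Finset.univ (fun i _ => ht i)]
    exact Finset.prod_congr rfl fun i _ => by
      rw [← hident i, Measure.map_apply (hmeas i) (ht i)]
  -- ties are null
  have hties : ∀ i j : Fin (n + 1), i ≠ j → ℙ {ω | s i ω = s j ω} = 0 := by
    intro i j hij
    have hmm : Measure.map (fun ω => (s i ω, s j ω)) ℙ = μ.prod μ := by
      have := (indepFun_iff_map_prod_eq_prod_map_map (hmeas i).aemeasurable
        (hmeas j).aemeasurable).mp (hindep.indepFun hij)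
      rw [this, hident i, hident j]
    have hdiag : MeasurableSet {p : ℝ × ℝ | p.1 = p.2} :=
      measurableSet_eq_fun measurable_fst measurable_snd
    have hset : {ω | s i ω = s j ω} = (fun ω => (s i ω, s j ω)) ⁻¹' {p | p.1 = p.2} := rfl
    rw [hset, ← Measure.map_apply ((hmeas i).prodMk (hmeas j)) hdiag, hmm,
      Measure.prod_apply hdiag]
    have hfib : ∀ x : ℝ, (Prod.mk x ⁻¹' {p : ℝ × ℝ | p.1 = p.2}) = {x} := by
      intro x; ext y; simp [eq_comm]
    simp [hfib]
  -- the tuple is a.s. injective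
  have hνinj : ν {x : Fin (n + 1) → ℝ | Function.Injective x}ᶜ = 0 := by
    have hsub : {x : Fin (n + 1) → ℝ | Function.Injective x}ᶜ
        ⊆ ⋃ (i) (j) (_ : i ≠ j), {x : Fin (n + 1) → ℝ | x i = x j} := by
      intro x hx
      simp only [Set.mem_compl_iff, Set.mem_setOf_eq, Function.Injective, not_forall] at hx
      obtain ⟨i, j, hij, hne⟩ := hx
      exact Set.mem_iUnion.mpr ⟨i, Set.mem_iUnion.mpr ⟨j, Set.mem_iUnion.mpr ⟨hne, hij⟩⟩⟩
    refine measure_mono_null hsub ?_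
    refine measure_iUnion_null fun i => measure_iUnion_null fun j =>
      measure_iUnion_null fun hij => ?_
    rw [← hmap, Measure.map_apply hf
      (measurableSet_eq_fun (measurable_pi_apply i) (measurable_pi_apply j))]
    exact hties i j hij
  have hνinj1 : ν {x : Fin (n + 1) → ℝ | Function.Injective x} = 1 :=
    (prob_compl_eq_zero_iff measurableSet_injSet).mp hνinj
  -- permutation invariance of the product measure
  have hperm : ∀ τ : Equiv.Perm (Fin (n + 1)),
      Measure.map (fun x : Fin (n + 1) → ℝ => x ∘ τ) ν = ν := by
    intro τ
    have h := measurePreserving_piCongrLeft (fun _ : Fin (n + 1) => μ) τ.symm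
    have hfun : ⇑(MeasurableEquiv.piCongrLeft (fun _ : Fin (n + 1) => ℝ) τ.symm)
        = fun x : Fin (n + 1) → ℝ => x ∘ τ := by
      funext x
      funext i
      have := Equiv.piCongrLeft_apply_apply (fun _ : Fin (n + 1) => ℝ) τ.symm x (τ i)
      simpa [MeasurableEquiv.coe_piCongrLeft] using this
    rw [← hfun]
    exact h.map_eq
  -- measurable rank sets
  have hAm : ∀ (i : Fin (n + 1)) (j : ℕ),
      MeasurableSet ({x : Fin (n + 1) → ℝ | Function.Injective x} ∩ {x | rkR x i = j}) :=
    fun i j => measurableSet_injSet.inter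
      (measurableSet_preimage (measurable_rkR i) (measurableSet_singleton j))
  -- uniform distribution of the rank of the last coordinate
  have huniform : ∀ j : ℕ, 1 ≤ j → j ≤ n + 1 →
      ν ({x : Fin (n + 1) → ℝ | Function.Injective x} ∩ {x | rkR x (Fin.last n) = j})
        = ((n : ℝ≥0∞) + 1)⁻¹ := by
    intro j hj1 hj2
    set A : Fin (n + 1) → Set (Fin (n + 1) → ℝ) :=
      fun i => {x | Function.Injective x} ∩ {x | rkR x i = j} with hAdef
    have hdisj : Pairwise (Function.onFun Disjoint A) := by
      intro i i' hii'
      rw [Function.onFun, Set.disjoint_left]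
      rintro x ⟨hxinj, hxi⟩ ⟨_, hxi'⟩
      exact hii' (rkR_inj hxinj (hxi.trans hxi'.symm))
    have hcover : ⋃ i, A i = {x : Fin (n + 1) → ℝ | Function.Injective x} := by
      ext x
      simp only [Set.mem_iUnion, hAdef, Set.mem_inter_iff, Set.mem_setOf_eq]
      constructor
      · rintro ⟨i, hxinj, _⟩; exact hxinj
      · intro hxinj
        obtain ⟨i, hi⟩ := rkR_surj hxinj hj1 hj2
        exact ⟨i, hxinj, hi⟩
    have hsum : ∑ i : Fin (n + 1), ν (A i) = 1 := by
      rw [← tsum_fintype (L := SummationFilter.unconditional _), ← measure_iUnion hdisj (fun i => hAm i j), hcover, hνinj1]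
    have hsame : ∀ i, ν (A i) = ν (A (Fin.last n)) := by
      intro i
      set τ := Equiv.swap i (Fin.last n) with hτdef
      have hmeasτ : Measurable fun x : Fin (n + 1) → ℝ => x ∘ τ :=
        measurable_pi_lambda _ fun j' => measurable_pi_apply _
      have hpre : (fun x : Fin (n + 1) → ℝ => x ∘ τ) ⁻¹' A (Fin.last n) = A i := by
        ext x
        simp only [Set.mem_preimage, hAdef, Set.mem_inter_iff, Set.mem_setOf_eq]
        have hrkeq : rkR (x ∘ τ) (Fin.last n) = rkR x i := by
          rw [rkR_comp_perm, hτdef, Equiv.swap_apply_right]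
        have hinj : Function.Injective (x ∘ τ) ↔ Function.Injective x := by
          constructor
          · intro h
            have h2 := h.comp τ.symm.injective
            have : (x ∘ ⇑τ) ∘ ⇑τ.symm = x := by
              funext a; simp
            rwa [this] at h2
          · intro h; exact h.comp τ.injective
        rw [hrkeq, hinj]
      rw [← hpre, ← Measure.map_apply hmeasτ (hAm (Fin.last n) j), hperm τ]
    have hsum' : ((n : ℝ≥0∞) + 1) * ν (A (Fin.last n)) = 1 := by
      calc ((n : ℝ≥0∞) + 1) * ν (A (Fin.last n))
          = ∑ _i : Fin (n + 1), ν (A (Fin.last n)) := by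
            rw [Finset.sum_const, Finset.card_univ, Fintype.card_fin, nsmul_eq_mul]
            push_cast; ring
        _ = ∑ i : Fin (n + 1), ν (A i) := by
            exact Finset.sum_congr rfl fun i _ => (hsame i).symm
        _ = 1 := hsum
    exact ENNReal.eq_inv_of_mul_eq_one_left (by rw [mul_comm]; exact hsum')
  -- the good event in the product space
  set G : Set (Fin (n + 1) → ℝ) :=
    {x | Function.Injective x} ∩ {x | rkR x (Fin.last n) ≤ k} with hGdef
  have hGm : MeasurableSet G :=
    measurableSet_injSet.inter
      (measurableSet_preimage (measurable_rkR (Fin.last n)) measurableSet_Iic)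
  have hGval : ν G = (k : ℝ≥0∞) * ((n : ℝ≥0∞) + 1)⁻¹ := by
    have hGun : G = ⋃ j ∈ Finset.Icc 1 k,
        ({x : Fin (n + 1) → ℝ | Function.Injective x} ∩ {x | rkR x (Fin.last n) = j}) := by
      ext x
      simp only [hGdef, Set.mem_inter_iff, Set.mem_setOf_eq, Set.mem_iUnion, Finset.mem_Icc]
      constructor
      · rintro ⟨hxinj, hxle⟩
        exact ⟨rkR x (Fin.last n),
          ⟨(Finset.mem_Icc.mp (rkR_mem_Icc x (Fin.last n))).1, hxle⟩, hxinj, rfl⟩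
      · rintro ⟨j, ⟨hj1, hjk⟩, hxinj, rfl⟩
        exact ⟨hxinj, hjk⟩
    rw [hGun, measure_biUnion_finset ?_ (fun j _ => hAm (Fin.last n) j)]
    · have : ∀ j ∈ Finset.Icc 1 k,
          ν ({x : Fin (n + 1) → ℝ | Function.Injective x} ∩ {x | rkR x (Fin.last n) = j})
            = ((n : ℝ≥0∞) + 1)⁻¹ := by
        intro j hj
        obtain ⟨hj1, hjk⟩ := Finset.mem_Icc.mp hj
        exact huniform j hj1 (hjk.trans (hk.trans n.le_succ))
      rw [Finset.sum_congr rfl this, Finset.sum_const, Nat.card_Icc, nsmul_eq_mul]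
      simp
    · intro j hj j' hj' hjj'
      rw [Function.onFun, Set.disjoint_left]
      rintro x ⟨_, hxj⟩ ⟨_, hxj'⟩
      exact hjj' (hxj.symm.trans hxj')
  -- a.e. identification of the event with the good event
  set S : Set Ω := {ω | s (Fin.last n) ω ≤
      kthSmallestR (Multiset.ofList (List.ofFn fun i : Fin n => s i.castSucc ω)) k} with hSdef
  have hae : S =ᵐ[ℙ] f ⁻¹' G := by
    have hT : ℙ (⋃ (i) (j) (_ : i ≠ j), {ω | s i ω = s j ω}) = 0 :=
      measure_iUnion_null fun i => measure_iUnion_null fun j =>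
        measure_iUnion_null fun hij => hties i j hij
    have hTc : ∀ᵐ ω ∂ℙ, ω ∉ ⋃ (i) (j) (_ : i ≠ j), {ω | s i ω = s j ω} :=
      compl_mem_ae_iff.mpr hT
    filter_upwards [hTc] with ω hω
    have hdist : ∀ i j : Fin (n + 1), i ≠ j → s i ω ≠ s j ω := by
      intro i j hij hx
      exact hω (Set.mem_iUnion.mpr ⟨i, Set.mem_iUnion.mpr ⟨j, Set.mem_iUnion.mpr ⟨hij, hx⟩⟩⟩)
    have hxinj : Function.Injective (f ω) := by
      intro i j hij
      by_contra hne
      exact hdist i j hne hij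
    have hneq : ∀ i : Fin n, f ω i.castSucc ≠ f ω (Fin.last n) :=
      fun i => hdist i.castSucc (Fin.last n) (Fin.castSucc_lt_last i).ne
    have hkey := key_equiv (f ω) hneq hk1 hk
    simp only [hSdef, Set.mem_setOf_eq, Set.mem_preimage, hGdef, Set.mem_inter_iff,
      eq_iff_iff]
    constructor
    · intro h
      exact ⟨hxinj, (hkey.mp h)⟩
    · rintro ⟨_, h⟩
      exact hkey.mpr h
  have hval : ℙ S = (k : ℝ≥0∞) * ((n : ℝ≥0∞) + 1)⁻¹ := by
    rw [measure_congr hae, ← Measure.map_apply hf hGm, hmap, hGval]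
  -- final arithmetic
  have hratio : (k : ℝ≥0∞) * ((n : ℝ≥0∞) + 1)⁻¹ = ENNReal.ofReal ((k : ℝ) / (n + 1)) := by
    rw [ENNReal.ofReal_div_of_pos (by positivity), ENNReal.ofReal_natCast, div_eq_mul_inv]
    congr 1
    rw [ENNReal.ofReal_add n.cast_nonneg zero_le_one, ENNReal.ofReal_natCast,
      ENNReal.ofReal_one]
  have hupper : (k : ℝ) < (1 - α) * (n + 1) + 1 := Nat.ceil_lt_add_one hpos.le
  have hlower : (1 - α) * (n + 1) ≤ (k : ℝ) := Nat.le_ceil _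
  have hn1 : (0:ℝ) < (n : ℝ) + 1 := by positivity
  constructor
  · rw [hval, hratio]
    apply ENNReal.ofReal_le_ofReal
    rw [le_div_iff₀ hn1]
    exact hlower
  · rw [hval, hratio]
    apply ENNReal.ofReal_le_ofReal
    rw [div_le_iff₀ hn1]
    have : (1 - α + 1 / ((n : ℝ) + 1)) * ((n : ℝ) + 1) = (1 - α) * (n + 1) + 1 := by
      field_simp
    rw [this]
    exact hupper.le
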